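/- Single extension step of a reduced alignment is proper (Lemma 1, repeatable-sequence case): let ε = pre ++ ε₁ ++ ε₂ ++ suf be a list of synchronizations such that projD ε₁ = projD ε₂ = α and projRG ε is a path. Suppose there exist positions j < ε₁.length and j' < ε₂.length such that ε₁.get j = MT a and ε₂.get j' = MT a for the same arc a, and the number of non-RH elements among the first j + 1 elements of ε₁ equals the number of non-RH elements among the first j' + 1 elements of ε₂. Define the middle copy mid := ε₂.take (j' + 1) ++ ε₁.drop (j + 1). Then for every natural number m ≥ 0, the extended alignment ε_ext := pre ++ ε₁ ++ mid^m ++ ε₂ ++ suf satisfies: (1) projD ε_ext = projD pre ++ α^(m+2) ++ projD suf, and (2) projRG ε_ext is a path with the same first arc and the same last arc as projRG ε. -/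

import Mathlib

/-- A synchronization: log move `LH`, model move `RH`, or synchronous move `MT`.
Arcs are triples `(src, label, tgt) : N × S × N`. -/
inductive Sync (S N : Type*) where
  | LH : S → Sync S N
  | RH : N × S × N → Sync S N
  | MT : N × S × N → Sync S N

/-- The log (DAFSA) projection: the trace labels of the `LH` and `MT` elements, in order. -/
def projD {S N : Type*} : List (Sync S N) → List S :=
  List.filterMap fun x =>
    match x with
    | .LH l => some l
    | .RH _ => none
    | .MT a => some a.2.1

/-- The model (reachability-graph) projection: the arcs of the `RH` and `MT`
elements, in order. -/
def projRG {S N : Type*} : List (Sync S N) → List (N × S × N) :=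
  List.filterMap fun x =>
    match x with
    | .LH _ => none
    | .RH a => some a
    | .MT a => some a

/-- Whether a synchronization is a model move (`RH`). -/
def isRH {S N : Type*} : Sync S N → Bool
  | .RH _ => true
  | _ => false


section Aux
variable {β : Type*}

lemma sandwich (x y : List β) (m : ℕ) :
    x ++ (List.replicate m (y ++ x)).flatten ++ y
      = (List.replicate (m + 1) (x ++ y)).flatten := by
  induction m generalizing x with
  | zero => simp
  | succ k ih =>
    rw [List.replicate_succ, List.flatten_cons]
    have := ih x
    rw [List.replicate_succ (n := k + 1), List.flatten_cons, ← ih x]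
    simp [List.append_assoc]

lemma flatten_replicate_getLast? (B : List β) (hB : B ≠ []) (k : ℕ) :
    ((List.replicate (k + 1) B).flatten).getLast? = B.getLast? := by
  rw [List.replicate_succ', List.flatten_append]
  simp [List.getLast?_append_of_ne_nil _ hB]

lemma chain_dup {R : β → β → Prop} {a : β} (A B C : List β)
    (hA : A.getLast? = some a) (hB : B.getLast? = some a)
    (h : List.Chain' R (A ++ B ++ C)) :
    List.Chain' R (A ++ B ++ (B ++ C)) := by
  have hBne : B ≠ [] := by intro h'; simp [h'] at hB
  unfold List.Chain' at h ⊢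
  rw [List.append_assoc, List.isChain_append] at h
  obtain ⟨hcA, hBC, hjAB⟩ := h
  rw [List.append_assoc, List.isChain_append]
  refine ⟨hcA, ?_, ?_⟩
  · rw [List.isChain_append]
    refine ⟨(List.isChain_append.mp hBC).1, hBC, ?_⟩
    intro x hx y hy
    rw [hB] at hx
    simp at hx; subst hx
    exact hjAB a (by rw [hA]; rfl) y hy
  · intro x hx y hy
    rw [List.head?_append_of_ne_nil _ hBne] at hy
    apply hjAB x hx
    rw [List.head?_append_of_ne_nil _ hBne]; exact hy

lemma chain_pump {R : β → β → Prop} {a : β} :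
    ∀ (k : ℕ) (A B C : List β), A.getLast? = some a → B.getLast? = some a →
      List.Chain' R (A ++ B ++ C) →
      List.Chain' R (A ++ (List.replicate (k + 1) B).flatten ++ C) := by
  intro k
  induction k with
  | zero => intro A B C _ _ h; simpa using h
  | succ n ih =>
    intro A B C hA hB h
    have h2 := chain_dup A B C hA hB h
    have hAB : (A ++ B).getLast? = some a := by
      have hBne : B ≠ [] := by intro h'; simp [h'] at hB
      rw [List.getLast?_append_of_ne_nil _ hBne]; exact hB
    have := ih (A ++ B) B C hAB hB (by simpa [List.append_assoc] using h2)
    rw [List.replicate_succ, List.flatten_cons]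
    simpa [List.append_assoc] using this

end Aux

section ProjAux
variable {S N : Type*}

lemma length_projD (l : List (Sync S N)) :
    (projD l).length = (l.filter fun x => !isRH x).length := by
  induction l with
  | nil => rfl
  | cons x t ih => cases x <;> simp [projD, isRH, List.filterMap_cons, List.filter_cons] at * <;> omega

lemma projD_append (l l' : List (Sync S N)) : projD (l ++ l') = projD l ++ projD l' :=
  List.filterMap_append

lemma projRG_append (l l' : List (Sync S N)) : projRG (l ++ l') = projRG l ++ projRG l' :=
  List.filterMap_append

lemma projD_flatten_replicate (L : List (Sync S N)) (m : ℕ) :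
    projD ((List.replicate m L).flatten) = (List.replicate m (projD L)).flatten := by
  induction m with
  | zero => rfl
  | succ n ih => simp [List.replicate_succ, projD_append, ih]

lemma projRG_flatten_replicate (L : List (Sync S N)) (m : ℕ) :
    projRG ((List.replicate m L).flatten) = (List.replicate m (projRG L)).flatten := by
  induction m with
  | zero => rfl
  | succ n ih => simp [List.replicate_succ, projRG_append, ih]

end ProjAux

/-- Single extension step of a reduced alignment is proper (repeatable-sequence case):
inserting `m` middle copies `mid := ε₂.take (j' + 1) ++ ε₁.drop (j + 1)` between the two
aligned copies of a tandem repeat yields an alignment whose log projection is the trace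
with `m + 2` copies of the repeat type and whose model projection is again a path with
the same first and last arcs. -/
theorem extension_step_repeatable {S N : Type*}
    (pre ε₁ ε₂ suf : List (Sync S N)) (α : List S) (a : N × S × N)
    (h₁ : projD ε₁ = α) (h₂ : projD ε₂ = α)
    (hpath : List.Chain' (fun x y => x.2.2 = y.1) (projRG (pre ++ ε₁ ++ ε₂ ++ suf)))
    (j j' : ℕ) (hj : j < ε₁.length) (hj' : j' < ε₂.length)
    (hget₁ : ε₁.get ⟨j, hj⟩ = Sync.MT a) (hget₂ : ε₂.get ⟨j', hj'⟩ = Sync.MT a)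
    (hcompl : ((ε₁.take (j + 1)).filter (fun x => !isRH x)).length
            = ((ε₂.take (j' + 1)).filter (fun x => !isRH x)).length)
    (m : ℕ) :
    projD (pre ++ ε₁ ++ (List.replicate m (ε₂.take (j' + 1) ++ ε₁.drop (j + 1))).flatten
            ++ ε₂ ++ suf)
      = projD pre ++ (List.replicate (m + 2) α).flatten ++ projD suf ∧
    List.Chain' (fun x y => x.2.2 = y.1)
      (projRG (pre ++ ε₁ ++ (List.replicate m (ε₂.take (j' + 1) ++ ε₁.drop (j + 1))).flatten
            ++ ε₂ ++ suf)) ∧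
    (projRG (pre ++ ε₁ ++ (List.replicate m (ε₂.take (j' + 1) ++ ε₁.drop (j + 1))).flatten
            ++ ε₂ ++ suf)).head?
      = (projRG (pre ++ ε₁ ++ ε₂ ++ suf)).head? ∧
    (projRG (pre ++ ε₁ ++ (List.replicate m (ε₂.take (j' + 1) ++ ε₁.drop (j + 1))).flatten
            ++ ε₂ ++ suf)).getLast?
      = (projRG (pre ++ ε₁ ++ ε₂ ++ suf)).getLast? := by
  -- Decompose ε₁ and ε₂ at the marked synchronous moves
  set t₁ := ε₁.take (j + 1) with ht₁def
  set d₁ := ε₁.drop (j + 1) with hd₁def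
  set t₂ := ε₂.take (j' + 1) with ht₂def
  set d₂ := ε₂.drop (j' + 1) with hd₂def
  have e₁ : t₁ ++ d₁ = ε₁ := List.take_append_drop _ _
  have e₂ : t₂ ++ d₂ = ε₂ := List.take_append_drop _ _
  have hg₁ : ε₁[j]? = some (Sync.MT a) := by
    rw [List.getElem?_eq_getElem hj]; exact congrArg some hget₁
  have hg₂ : ε₂[j']? = some (Sync.MT a) := by
    rw [List.getElem?_eq_getElem hj']; exact congrArg some hget₂
  have ht₁ : t₁ = ε₁.take j ++ [Sync.MT a] := by
    rw [ht₁def, List.take_succ, hg₁]; rfl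
  have ht₂ : t₂ = ε₂.take j' ++ [Sync.MT a] := by
    rw [ht₂def, List.take_succ, hg₂]; rfl
  have hprojsingle : projRG [Sync.MT a] = [a] := rfl
  -- log-projection equalities
  have hsplit₁ : projD t₁ ++ projD d₁ = α := by rw [← projD_append, e₁, h₁]
  have hsplit₂ : projD t₂ ++ projD d₂ = α := by rw [← projD_append, e₂, h₂]
  have hlen : (projD t₁).length = (projD t₂).length := by
    rw [length_projD, length_projD]; exact hcompl
  obtain ⟨hTD, -⟩ := List.append_inj (hsplit₁.trans hsplit₂.symm) hlen
  have hmid : projD (t₂ ++ d₁) = α := by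
    rw [projD_append, ← hTD, ← projD_append, e₁, h₁]
  -- getLast? facts for the model projection
  have hA : (projRG (pre ++ t₁)).getLast? = some a := by
    rw [show pre ++ t₁ = (pre ++ ε₁.take j) ++ [Sync.MT a] by
        rw [ht₁, ← List.append_assoc],
      projRG_append, hprojsingle]
    exact List.getLast?_concat
  have hB : (projRG (d₁ ++ t₂)).getLast? = some a := by
    rw [show d₁ ++ t₂ = (d₁ ++ ε₂.take j') ++ [Sync.MT a] by
        rw [ht₂, ← List.append_assoc],
      projRG_append, hprojsingle]
    exact List.getLast?_concat
  have hAne : projRG (pre ++ t₁) ≠ [] := fun h => by simp [h] at hA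
  have hBne : projRG (d₁ ++ t₂) ≠ [] := fun h => by simp [h] at hB
  -- restructure the old and new alignments
  have keyold : pre ++ ε₁ ++ ε₂ ++ suf = (pre ++ t₁) ++ (d₁ ++ t₂) ++ (d₂ ++ suf) := by
    rw [← e₁, ← e₂]; simp [List.append_assoc]
  have key : pre ++ ε₁ ++ (List.replicate m (t₂ ++ d₁)).flatten ++ ε₂ ++ suf
      = (pre ++ t₁) ++ (List.replicate (m + 1) (d₁ ++ t₂)).flatten ++ (d₂ ++ suf) := by
    rw [← sandwich d₁ t₂ m, ← e₁, ← e₂]; simp [List.append_assoc]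
  have hbase : List.Chain' (fun x y => x.2.2 = y.1)
      (projRG (pre ++ t₁) ++ projRG (d₁ ++ t₂) ++ projRG (d₂ ++ suf)) := by
    rw [keyold] at hpath
    simpa [projRG_append, List.append_assoc] using hpath
  have splitRG : ∀ (X Y Z : List (Sync S N)),
      projRG (X ++ Y ++ Z) = projRG X ++ projRG Y ++ projRG Z := fun X Y Z => by
    rw [projRG_append, projRG_append]
  refine ⟨?_, ?_, ?_, ?_⟩
  · -- log projection
    have hrep : (List.replicate (m + 2) α).flatten
        = α ++ ((List.replicate m α).flatten ++ α) := by
      rw [show m + 2 = (m + 1) + 1 from rfl, List.replicate_succ,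
        List.replicate_succ', List.flatten_cons, List.flatten_append]
      simp
    simp [projD_append, projD_flatten_replicate, hmid, h₁, h₂, hrep, List.append_assoc]
  · -- path property
    rw [key, splitRG, projRG_flatten_replicate]
    exact chain_pump m _ _ _ hA hB hbase
  · -- same first arc
    rw [key, keyold, splitRG, splitRG, List.append_assoc, List.append_assoc,
      List.head?_append_of_ne_nil _ hAne, List.head?_append_of_ne_nil _ hAne]
  · -- same last arc
    rw [key, keyold, splitRG, splitRG, projRG_flatten_replicate]
    simp [List.getLast?_append, flatten_replicate_getLast? _ hBne]
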